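/- For g > 0, λ > 0, T ∈ ℝ^{2×3}, N ∈ ℝ^{1×3} with (T;N) orthogonal, the proximal mapping of the function q(u) = g‖T u‖ + δ_S(u), where S = ker N, satisfies: prox_{λq}(u) = 0 if ‖T u‖ ≤ λg, and prox_{λq}(u) = (1 - λg/‖T u‖)·Tᵀ T u otherwise. -/
import Mathlib


open Matrix

lemma dot2_nonneg (w : Fin 2 → ℝ) : 0 ≤ w ⬝ᵥ w := by
  simp only [dotProduct, Fin.sum_univ_two]
  nlinarith [sq_nonneg (w 0), sq_nonneg (w 1)]

lemma dot2_eq_zero {w : Fin 2 → ℝ} (h : w ⬝ᵥ w = 0) : w = 0 := by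
  simp only [dotProduct, Fin.sum_univ_two] at h
  have h0 : w 0 = 0 := by nlinarith [sq_nonneg (w 0), sq_nonneg (w 1)]
  have h1 : w 1 = 0 := by nlinarith [sq_nonneg (w 0), sq_nonneg (w 1)]
  funext i; fin_cases i <;> simp [h0, h1]

lemma cs2 (s w : Fin 2 → ℝ) : s ⬝ᵥ w ≤ Real.sqrt (s ⬝ᵥ s) * Real.sqrt (w ⬝ᵥ w) := by
  have h1 : (s ⬝ᵥ w) ^ 2 ≤ (s ⬝ᵥ s) * (w ⬝ᵥ w) := by
    simp only [dotProduct, Fin.sum_univ_two]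
    nlinarith [sq_nonneg (s 0 * w 1 - s 1 * w 0)]
  calc s ⬝ᵥ w ≤ |s ⬝ᵥ w| := le_abs_self _
    _ = Real.sqrt ((s ⬝ᵥ w) ^ 2) := (Real.sqrt_sq_eq_abs _).symm
    _ ≤ Real.sqrt ((s ⬝ᵥ s) * (w ⬝ᵥ w)) := Real.sqrt_le_sqrt h1
    _ = _ := Real.sqrt_mul (dot2_nonneg s) _

/-- Key inequality: soft-thresholding optimality via a subgradient `s`. -/
lemma key2 (c : ℝ) (a s wst w : Fin 2 → ℝ)
    (hs : Real.sqrt (s ⬝ᵥ s) ≤ c)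
    (hsw : s ⬝ᵥ wst = c * Real.sqrt (wst ⬝ᵥ wst))
    (hws : wst = a - s) :
    (1/2) * ((wst - a) ⬝ᵥ (wst - a)) + c * Real.sqrt (wst ⬝ᵥ wst)
      + (1/2) * ((w - wst) ⬝ᵥ (w - wst))
      ≤ (1/2) * ((w - a) ⬝ᵥ (w - a)) + c * Real.sqrt (w ⬝ᵥ w) := by
  have hcs : s ⬝ᵥ w ≤ c * Real.sqrt (w ⬝ᵥ w) :=
    le_trans (cs2 s w) (mul_le_mul_of_nonneg_right hs (Real.sqrt_nonneg _))
  subst hws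
  simp only [dotProduct, Fin.sum_univ_two, Pi.sub_apply] at *
  nlinarith [hcs, hsw]

/-- Proximal mapping of `q(u) = g‖Tu‖ + δ_{ker N}(u)` on `ℝ³`, `(T;N)` orthogonal:
`prox_{λq}(u) = 0` if `‖Tu‖ ≤ λg`, and `(1 - λg/‖Tu‖) Tᵀ T u` otherwise; i.e. this
point lies in `S = ker N` and is the unique minimizer over `S` of
`z ↦ (1/2)‖z-u‖² + λ g‖Tz‖`. -/
theorem stmt3 (g lam : ℝ) (hg : 0 < g) (hlam : 0 < lam)
    (T : Matrix (Fin 2) (Fin 3) ℝ) (N : Matrix (Fin 1) (Fin 3) ℝ)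
    (hQ : (Matrix.fromRows T N)ᵀ * (Matrix.fromRows T N) = 1)
    (u p : Fin 3 → ℝ)
    (hp : p = if Real.sqrt (T.mulVec u ⬝ᵥ T.mulVec u) ≤ lam * g then 0
      else (1 - lam * g / Real.sqrt (T.mulVec u ⬝ᵥ T.mulVec u)) • (Tᵀ * T).mulVec u) :
    N.mulVec p = 0 ∧
    (∀ z : Fin 3 → ℝ, N.mulVec z = 0 →
      (1/2) * ((p - u) ⬝ᵥ (p - u)) + lam * (g * Real.sqrt (T.mulVec p ⬝ᵥ T.mulVec p))
        ≤ (1/2) * ((z - u) ⬝ᵥ (z - u)) + lam * (g * Real.sqrt (T.mulVec z ⬝ᵥ T.mulVec z))) ∧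
    (∀ z : Fin 3 → ℝ, N.mulVec z = 0 →
      (1/2) * ((z - u) ⬝ᵥ (z - u)) + lam * (g * Real.sqrt (T.mulVec z ⬝ᵥ T.mulVec z))
        ≤ (1/2) * ((p - u) ⬝ᵥ (p - u)) + lam * (g * Real.sqrt (T.mulVec p ⬝ᵥ T.mulVec p))
      → z = p) := by
  have hcpos : 0 < lam * g := mul_pos hlam hg
  have hQ' : fromRows T N * (fromRows T N)ᵀ = 1 :=
    (Matrix.mul_eq_one_comm_of_equiv finSumFinEquiv.symm).mp hQ
  rw [transpose_fromRows, fromCols_mul_fromRows] at hQ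
  rw [transpose_fromRows, fromRows_mul_fromCols, ← Matrix.fromBlocks_one] at hQ'
  have hTT : T * Tᵀ = 1 := by
    simpa only [Matrix.toBlocks_fromBlocks₁₁] using congrArg Matrix.toBlocks₁₁ hQ'
  have hNT : N * Tᵀ = 0 := by
    simpa only [Matrix.toBlocks_fromBlocks₂₁] using congrArg Matrix.toBlocks₂₁ hQ'
  -- hQ : Tᵀ * T + Nᵀ * N = 1
  have hdec : ∀ v : Fin 3 → ℝ,
      v ⬝ᵥ v = T.mulVec v ⬝ᵥ T.mulVec v + N.mulVec v ⬝ᵥ N.mulVec v := by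
    intro v
    have h1 : v ⬝ᵥ v = v ⬝ᵥ ((Tᵀ * T + Nᵀ * N).mulVec v) := by rw [hQ, Matrix.one_mulVec]
    have hd1 : ∀ x : Fin 2 → ℝ, v ⬝ᵥ Tᵀ.mulVec x = T.mulVec v ⬝ᵥ x := fun x => by
      rw [Matrix.dotProduct_mulVec, Matrix.vecMul_transpose]
    have hd2 : ∀ x : Fin 1 → ℝ, v ⬝ᵥ Nᵀ.mulVec x = N.mulVec v ⬝ᵥ x := fun x => by
      rw [Matrix.dotProduct_mulVec, Matrix.vecMul_transpose]
    rw [h1, Matrix.add_mulVec, dotProduct_add, ← Matrix.mulVec_mulVec, ← Matrix.mulVec_mulVec,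
      hd1, hd2]
  have hker : ∀ z : Fin 3 → ℝ, N.mulVec z = 0 → Tᵀ.mulVec (T.mulVec z) = z := by
    intro z hz
    have h1 : (Tᵀ * T + Nᵀ * N).mulVec z = z := by rw [hQ, Matrix.one_mulVec]
    rwa [Matrix.add_mulVec, ← Matrix.mulVec_mulVec, ← Matrix.mulVec_mulVec, hz,
      Matrix.mulVec_zero, add_zero] at h1
  have hNp : N.mulVec p = 0 := by
    rw [hp]; split_ifs with h
    · simp
    · rw [Matrix.mulVec_smul, Matrix.mulVec_mulVec, ← Matrix.mul_assoc, hNT, Matrix.zero_mul,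
        Matrix.zero_mulVec, smul_zero]
  have hTp : T.mulVec p = if Real.sqrt (T.mulVec u ⬝ᵥ T.mulVec u) ≤ lam * g then 0
      else (1 - lam * g / Real.sqrt (T.mulVec u ⬝ᵥ T.mulVec u)) • T.mulVec u := by
    rw [hp]; split_ifs with h
    · simp
    · rw [Matrix.mulVec_smul, Matrix.mulVec_mulVec, ← Matrix.mul_assoc, hTT, Matrix.one_mul]
  obtain ⟨s, hs, hsw, hws⟩ : ∃ s : Fin 2 → ℝ,
      Real.sqrt (s ⬝ᵥ s) ≤ lam * g ∧
      s ⬝ᵥ T.mulVec p = (lam * g) * Real.sqrt (T.mulVec p ⬝ᵥ T.mulVec p) ∧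
      T.mulVec p = T.mulVec u - s := by
    by_cases h : Real.sqrt (T.mulVec u ⬝ᵥ T.mulVec u) ≤ lam * g
    · refine ⟨T.mulVec u, h, ?_, ?_⟩ <;> rw [hTp, if_pos h]
      · simp
      · rw [sub_self]
    · set r : ℝ := Real.sqrt (T.mulVec u ⬝ᵥ T.mulVec u) with hr
      have hrpos : 0 < r := lt_trans hcpos (not_le.mp h)
      have hlt : lam * g < r := not_le.mp h
      have haa : T.mulVec u ⬝ᵥ T.mulVec u = r ^ 2 :=
        (Real.sq_sqrt (dot2_nonneg (T.mulVec u))).symm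
      set t : ℝ := lam * g / r with ht
      have ht01 : 0 < t ∧ t < 1 := ⟨div_pos hcpos hrpos, (div_lt_one hrpos).mpr hlt⟩
      have htr : t * r = lam * g := div_mul_cancel₀ _ hrpos.ne'
      refine ⟨t • T.mulVec u, ?_, ?_, ?_⟩
      · have hss : (t • T.mulVec u) ⬝ᵥ (t • T.mulVec u) = (lam * g) ^ 2 := by
          rw [smul_dotProduct, dotProduct_smul, haa, smul_eq_mul, smul_eq_mul, ← htr]; ring
        rw [hss, Real.sqrt_sq hcpos.le]
      · rw [hTp, if_neg h]
        have h1 : (t • T.mulVec u) ⬝ᵥ ((1 - t) • T.mulVec u) = t * (1 - t) * r ^ 2 := by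
          rw [smul_dotProduct, dotProduct_smul, haa, smul_eq_mul, smul_eq_mul]; ring
        have h2 : ((1 - t) • T.mulVec u) ⬝ᵥ ((1 - t) • T.mulVec u) = ((1 - t) * r) ^ 2 := by
          rw [smul_dotProduct, dotProduct_smul, haa, smul_eq_mul, smul_eq_mul]; ring
        rw [h1, h2, Real.sqrt_sq (by nlinarith [ht01.2, hrpos] : 0 ≤ (1 - t) * r)]
        nlinarith [htr]
      · rw [hTp, if_neg h, sub_smul, one_smul]
  have main : ∀ z : Fin 3 → ℝ, N.mulVec z = 0 →
      (1/2) * ((p - u) ⬝ᵥ (p - u)) + lam * (g * Real.sqrt (T.mulVec p ⬝ᵥ T.mulVec p))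
        + (1/2) * ((T.mulVec z - T.mulVec p) ⬝ᵥ (T.mulVec z - T.mulVec p))
        ≤ (1/2) * ((z - u) ⬝ᵥ (z - u)) + lam * (g * Real.sqrt (T.mulVec z ⬝ᵥ T.mulVec z)) := by
    intro z hz
    have e1 : (z - u) ⬝ᵥ (z - u)
        = (T.mulVec z - T.mulVec u) ⬝ᵥ (T.mulVec z - T.mulVec u)
          + N.mulVec u ⬝ᵥ N.mulVec u := by
      rw [hdec (z - u), Matrix.mulVec_sub, Matrix.mulVec_sub, hz, zero_sub,
        neg_dotProduct, dotProduct_neg, neg_neg]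
    have e2 : (p - u) ⬝ᵥ (p - u)
        = (T.mulVec p - T.mulVec u) ⬝ᵥ (T.mulVec p - T.mulVec u)
          + N.mulVec u ⬝ᵥ N.mulVec u := by
      rw [hdec (p - u), Matrix.mulVec_sub, Matrix.mulVec_sub, hNp, zero_sub,
        neg_dotProduct, dotProduct_neg, neg_neg]
    have hk := key2 (lam * g) (T.mulVec u) s (T.mulVec p) (T.mulVec z) hs hsw hws
    rw [e1, e2]
    simp only [← mul_assoc]
    linarith
  refine ⟨hNp, fun z hz => ?_, fun z hz hle => ?_⟩
  · have h1 := main z hz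
    have h0 := dot2_nonneg (T.mulVec z - T.mulVec p)
    linarith
  · have h1 := main z hz
    have h0 := dot2_nonneg (T.mulVec z - T.mulVec p)
    have hzero : (T.mulVec z - T.mulVec p) ⬝ᵥ (T.mulVec z - T.mulVec p) = 0 := by linarith
    have hTzp : T.mulVec z = T.mulVec p := sub_eq_zero.mp (dot2_eq_zero hzero)
    calc z = Tᵀ.mulVec (T.mulVec z) := (hker z hz).symm
      _ = Tᵀ.mulVec (T.mulVec p) := by rw [hTzp]
      _ = p := hker p hNp
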